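/- For any ADSAGA state, E[φ1⁺] − φ1 ≤ −(4·m·η²·p_min/n)·⟨v, Σ_{i=1}^n ∇f_i(x)⟩ + 4·m·L_f·η³·p_min·Σ_j ‖u_j‖² + (4·m²·L_f·η³·p_min/n)·Σ_i ‖α*_i‖², where φ1⁺ denotes the value of φ1 at the state produced by one step with choice (j, i). -/

import Mathlib

open Finset
open scoped RealInnerProductSpace BigOperators

noncomputable section

/-- The state of the ADSAGA algorithm. -/
structure AdsagaState (d n m : ℕ) where
  x : EuclideanSpace ℝ (Fin d)
  u : Fin m → EuclideanSpace ℝ (Fin d)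
  g : Fin m → EuclideanSpace ℝ (Fin d)
  beta : Fin m → EuclideanSpace ℝ (Fin d)
  alpha : Fin n → EuclideanSpace ℝ (Fin d)
  idx : Fin m → Fin n

namespace AdsagaState

variable {d n m : ℕ}

/-- `h_j = g_j - β_j`. -/
def hvec (S : AdsagaState d n m) (j : Fin m) : EuclideanSpace ℝ (Fin d) :=
  S.g j - S.beta j

/-- `ᾱ = (1/n) ∑ i, α_i`. -/
def abar (S : AdsagaState d n m) : EuclideanSpace ℝ (Fin d) :=
  ((1 : ℝ) / n) • ∑ i, S.alpha i

/-- `v = ∑ j, u_j + m • ᾱ`. -/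
def v (S : AdsagaState d n m) : EuclideanSpace ℝ (Fin d) :=
  (∑ j, S.u j) + (m : ℝ) • S.abar

/-- One ADSAGA step with choice `(j, i)` (where `i` is meant to lie in `S_j`). -/
def step (gradf : Fin n → EuclideanSpace ℝ (Fin d) → EuclideanSpace ℝ (Fin d))
    (p : Fin m → ℝ) (pmin η : ℝ) (S : AdsagaState d n m) (j : Fin m) (i : Fin n) :
    AdsagaState d n m where
  x := S.x - (η * pmin / p j) • (S.u j + S.abar)
  alpha := Function.update S.alpha (S.idx j) (S.g j)
  g := Function.update S.g j (gradf i S.x)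
  beta := Function.update S.beta j (if i = S.idx j then S.g j else S.alpha i)
  u := Function.update S.u j
    ((1 - pmin / p j) • S.u j
      + (pmin / p j) • (gradf i S.x - (if i = S.idx j then S.g j else S.alpha i))
      - ((m : ℝ) / n * (1 - pmin / p j)) • S.hvec j)
  idx := Function.update S.idx j i

/-- Run `k` ADSAGA steps, with the `t`-th choice given by the index `ω t` (on machine `J (ω t)`). -/
def run (gradf : Fin n → EuclideanSpace ℝ (Fin d) → EuclideanSpace ℝ (Fin d))
    (p : Fin m → ℝ) (pmin η : ℝ) (J : Fin n → Fin m) (S0 : AdsagaState d n m) :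
    (k : ℕ) → (Fin k → Fin n) → AdsagaState d n m
  | 0, _ => S0
  | (k + 1), ω =>
      step gradf p pmin η (run gradf p pmin η J S0 k (fun t => ω t.castSucc))
        (J (ω (Fin.last k))) (ω (Fin.last k))

end AdsagaState

/-- `φ1 = 4mη (f(x) - f(x^*))` where `f` is the average of the `f_i`. -/
def phi1 (f : Fin n → EuclideanSpace ℝ (Fin d) → ℝ) (xstar : EuclideanSpace ℝ (Fin d))
    {m : ℕ} (η : ℝ) (S : AdsagaState d n m) : ℝ :=
  4 * (m : ℝ) * η * ((((1 : ℝ) / n) * ∑ i, f i S.x) - (((1 : ℝ) / n) * ∑ i, f i xstar))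

/-- `φ2 = ‖y‖² - 2η⟪y, v⟫ + 2η²‖v‖²`. -/
def phi2 (xstar : EuclideanSpace ℝ (Fin d)) {n m : ℕ} (η : ℝ) (S : AdsagaState d n m) : ℝ :=
  ‖S.x - xstar‖ ^ 2 - 2 * η * ⟪S.x - xstar, S.v⟫ + 2 * η ^ 2 * ‖S.v‖ ^ 2

/-- `φ3 = η² c3 ∑ j, (pmin / p j) ‖g*_j‖²`. -/
def phi3 (gradf : Fin n → EuclideanSpace ℝ (Fin d) → EuclideanSpace ℝ (Fin d))
    (xstar : EuclideanSpace ℝ (Fin d)) {m : ℕ} (p : Fin m → ℝ) (pmin η c3 : ℝ)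
    (S : AdsagaState d n m) : ℝ :=
  η ^ 2 * c3 * ∑ j, (pmin / p j) * ‖S.g j - gradf (S.idx j) xstar‖ ^ 2

/-- `φ4 = η² c4 (2 ∑ i, (pmin / p (J i)) ‖α*_i‖² - ∑ j, (pmin / p j) ‖β*_j‖²)`. -/
def phi4 (gradf : Fin n → EuclideanSpace ℝ (Fin d) → EuclideanSpace ℝ (Fin d))
    (xstar : EuclideanSpace ℝ (Fin d)) {m : ℕ} (J : Fin n → Fin m) (p : Fin m → ℝ)
    (pmin η c4 : ℝ) (S : AdsagaState d n m) : ℝ :=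
  η ^ 2 * c4 * ((2 * ∑ i, (pmin / p (J i)) * ‖S.alpha i - gradf i xstar‖ ^ 2)
    - ∑ j, (pmin / p j) * ‖S.beta j - gradf (S.idx j) xstar‖ ^ 2)

/-- `φ5 = η² c5 ∑ j, ‖u_j‖²`. -/
def phi5 {d n m : ℕ} (η c5 : ℝ) (S : AdsagaState d n m) : ℝ :=
  η ^ 2 * c5 * ∑ j, ‖S.u j‖ ^ 2

/-- The total potential `φ = φ1 + φ2 + φ3 + φ4 + φ5`. -/
def phiTot (f : Fin n → EuclideanSpace ℝ (Fin d) → ℝ)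
    (gradf : Fin n → EuclideanSpace ℝ (Fin d) → EuclideanSpace ℝ (Fin d))
    (xstar : EuclideanSpace ℝ (Fin d)) {m : ℕ} (J : Fin n → Fin m) (p : Fin m → ℝ)
    (pmin η c3 c4 c5 : ℝ) (S : AdsagaState d n m) : ℝ :=
  phi1 f xstar η S + phi2 xstar η S + phi3 gradf xstar p pmin η c3 S
    + phi4 gradf xstar J p pmin η c4 S + phi5 η c5 S

end


section DescentAux

lemma adsaga_descent_lemma {E : Type*} [NormedAddCommGroup E] [InnerProductSpace ℝ E]
    [CompleteSpace E]
    (F : E → ℝ) (G : E → E) (Lf : ℝ) (hLf : 0 ≤ Lf)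
    (hgrad : ∀ x, HasGradientAt F (G x) x)
    (hlip : ∀ x y, ‖G x - G y‖ ≤ Lf * ‖x - y‖) (x δ : E) :
    F (x + δ) ≤ F x + ⟪G x, δ⟫ + Lf / 2 * ‖δ‖ ^ 2 := by
  have hGcont : Continuous G := by
    have : LipschitzWith (Real.toNNReal Lf) G := by
      apply LipschitzWith.of_dist_le_mul
      intro a b
      simpa [dist_eq_norm, Real.coe_toNNReal _ hLf] using hlip a b
    exact this.continuous
  have key : ∀ t : ℝ, HasDerivAt (fun t : ℝ => F (x + t • δ)) ⟪G (x + t • δ), δ⟫ t := by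
    intro t
    have h1 : HasDerivAt (fun t : ℝ => x + t • δ) δ t := by
      simpa using ((hasDerivAt_id t).smul_const δ).const_add x
    have h2 := ((hgrad (x + t • δ)).hasFDerivAt).comp_hasDerivAt t h1
    simpa [InnerProductSpace.toDual_apply_apply, Function.comp_def] using h2
  have hcont : Continuous fun t : ℝ => ⟪G (x + t • δ), δ⟫ := by
    exact (hGcont.comp (by continuity)).inner continuous_const
  have hint : ∫ t in (0:ℝ)..1, ⟪G (x + t • δ), δ⟫ = F (x + δ) - F x := by
    have := intervalIntegral.integral_eq_sub_of_hasDerivAt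
      (f := fun t : ℝ => F (x + t • δ)) (f' := fun t => ⟪G (x + t • δ), δ⟫)
      (fun t _ => key t) (hcont.intervalIntegrable 0 1)
    simpa using this
  have hcont2 : Continuous fun t : ℝ => ⟪G x, δ⟫ + Lf * ‖δ‖ ^ 2 * t := by continuity
  have hbound : ∫ t in (0:ℝ)..1, ⟪G (x + t • δ), δ⟫
      ≤ ∫ t in (0:ℝ)..1, (⟪G x, δ⟫ + Lf * ‖δ‖ ^ 2 * t) := by
    apply intervalIntegral.integral_mono_on (by norm_num) (hcont.intervalIntegrable 0 1)
      (hcont2.intervalIntegrable 0 1)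
    intro t ht
    have h1 : ⟪G (x + t • δ), δ⟫ = ⟪G x, δ⟫ + ⟪G (x + t • δ) - G x, δ⟫ := by
      rw [inner_sub_left]; ring
    have h2 : ⟪G (x + t • δ) - G x, δ⟫ ≤ ‖G (x + t • δ) - G x‖ * ‖δ‖ :=
      real_inner_le_norm _ _
    have h3 : ‖G (x + t • δ) - G x‖ ≤ Lf * (t * ‖δ‖) := by
      have := hlip (x + t • δ) x
      simpa [norm_smul, abs_of_nonneg ht.1] using this
    have h4 : ‖G (x + t • δ) - G x‖ * ‖δ‖ ≤ Lf * (t * ‖δ‖) * ‖δ‖ :=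
      mul_le_mul_of_nonneg_right h3 (norm_nonneg _)
    nlinarith [norm_nonneg δ]
  have hval : ∫ t in (0:ℝ)..1, (⟪G x, δ⟫ + Lf * ‖δ‖ ^ 2 * t)
      = ⟪G x, δ⟫ + Lf / 2 * ‖δ‖ ^ 2 := by
    have hd : ∀ t : ℝ, HasDerivAt
        (fun t : ℝ => ⟪G x, δ⟫ * t + Lf * ‖δ‖ ^ 2 / 2 * t ^ 2)
        (⟪G x, δ⟫ + Lf * ‖δ‖ ^ 2 * t) t := by
      intro t
      have h1 : HasDerivAt (fun t : ℝ => ⟪G x, δ⟫ * t) ⟪G x, δ⟫ t := by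
        simpa using (hasDerivAt_id t).const_mul ⟪G x, δ⟫
      have h2 : HasDerivAt (fun t : ℝ => Lf * ‖δ‖ ^ 2 / 2 * t ^ 2)
          (Lf * ‖δ‖ ^ 2 * t) t := by
        have := (hasDerivAt_pow 2 t).const_mul (Lf * ‖δ‖ ^ 2 / 2)
        convert this using 1
        · rfl
        · rfl
        ring
      exact h1.add h2
    have := intervalIntegral.integral_eq_sub_of_hasDerivAt
      (f := fun t : ℝ => ⟪G x, δ⟫ * t + Lf * ‖δ‖ ^ 2 / 2 * t ^ 2)
      (fun t _ => hd t) (hcont2.intervalIntegrable 0 1)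
    rw [this]
    ring
  linarith [hint ▸ hbound, hval ▸ hbound]

end DescentAux

set_option maxHeartbeats 2000000 in
theorem adsaga_phi1_decrease
    {d n m : ℕ} (hd : 0 < d) (hn : 0 < n) (hm : 0 < m) (hmn : m ∣ n)
    (L Lf μ : ℝ) (hL : 0 < L) (hLf : 0 < Lf) (hμ : 0 < μ)
    (f : Fin n → EuclideanSpace ℝ (Fin d) → ℝ)
    (gradf : Fin n → EuclideanSpace ℝ (Fin d) → EuclideanSpace ℝ (Fin d))
    (hgrad : ∀ i x, HasGradientAt (f i) (gradf i x) x)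
    (hconv : ∀ i, ConvexOn ℝ Set.univ (f i))
    (hsmooth : ∀ i (x y : EuclideanSpace ℝ (Fin d)), ‖gradf i x - gradf i y‖ ≤ L * ‖x - y‖)
    (hFsmooth : ∀ x y : EuclideanSpace ℝ (Fin d),
      ‖((1 : ℝ) / n) • (∑ i, gradf i x) - ((1 : ℝ) / n) • (∑ i, gradf i y)‖ ≤ Lf * ‖x - y‖)
    (hFstrong : ∀ x y : EuclideanSpace ℝ (Fin d),
      μ * ‖x - y‖ ^ 2 ≤
        ⟪((1 : ℝ) / n) • (∑ i, gradf i x) - ((1 : ℝ) / n) • (∑ i, gradf i y), x - y⟫)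
    (xstar : EuclideanSpace ℝ (Fin d))
    (hmin : ∀ x : EuclideanSpace ℝ (Fin d),
      (((1 : ℝ) / n) * ∑ i, f i xstar) ≤ ((1 : ℝ) / n) * ∑ i, f i x)
    (hstarzero : (∑ i, gradf i xstar) = 0)
    (J : Fin n → Fin m)
    (hpart : ∀ j, (Finset.univ.filter (fun i => J i = j)).card = n / m)
    (p : Fin m → ℝ) (hp : ∀ j, 0 < p j) (hpsum : (∑ j, p j) = 1)
    (pmin pmax : ℝ)
    (hpmin : IsLeast (Set.range p) pmin) (hpmax : IsGreatest (Set.range p) pmax)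
    (η : ℝ) (hη : 0 < η)
    (S : AdsagaState d n m)
    (hidx : ∀ j, J (S.idx j) = j)
    (hinv : ∀ j, S.alpha (S.idx j) = S.beta j)
    :
    (∑ i : Fin n, p (J i) * ((m : ℝ) / n) * phi1 f xstar η (AdsagaState.step gradf p pmin η S (J i) i))
        - phi1 f xstar η S
      ≤ -(4 * (m : ℝ) * η ^ 2 * pmin / n) * ⟪S.v, ∑ i, gradf i S.x⟫
        + 4 * (m : ℝ) * Lf * η ^ 3 * pmin * (∑ j, ‖S.u j‖ ^ 2)
        + (4 * (m : ℝ) ^ 2 * Lf * η ^ 3 * pmin / n) *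
            (∑ i, ‖S.alpha i - gradf i xstar‖ ^ 2) := by
  classical
  have hm0 : (m:ℝ) ≠ 0 := Nat.cast_ne_zero.2 hm.ne'
  have hn0 : (n:ℝ) ≠ 0 := Nat.cast_ne_zero.2 hn.ne'
  have hmpos : (0:ℝ) < m := Nat.cast_pos.2 hm
  have hnpos : (0:ℝ) < n := Nat.cast_pos.2 hn
  obtain ⟨j0, hj0⟩ := hpmin.1
  have hpminpos : 0 < pmin := hj0 ▸ hp j0
  have hple : ∀ j, pmin ≤ p j := fun j => hpmin.2 ⟨j, rfl⟩
  obtain ⟨F, hF⟩ : ∃ F : EuclideanSpace ℝ (Fin d) → ℝ,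
      F = fun y => ((1:ℝ)/n) * ∑ i, f i y := ⟨_, rfl⟩
  obtain ⟨G, hG⟩ : ∃ G : EuclideanSpace ℝ (Fin d) → EuclideanSpace ℝ (Fin d),
      G = fun y => ((1:ℝ)/n) • ∑ i, gradf i y := ⟨_, rfl⟩
  obtain ⟨δ, hδ⟩ : ∃ δ : Fin m → EuclideanSpace ℝ (Fin d),
      δ = fun j => -((η * pmin / p j) • (S.u j + S.abar)) := ⟨_, rfl⟩
  obtain ⟨qq, hqq⟩ : ∃ qq : Fin m → ℝ,
      qq = fun j => ⟪G S.x, δ j⟫ + Lf / 2 * ‖δ j‖ ^ 2 := ⟨_, rfl⟩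
  have hgradF : ∀ y, HasGradientAt F (G y) y := by
    intro y
    rw [hasGradientAt_iff_hasFDerivAt]
    have hs : HasFDerivAt (fun z => ∑ i, f i z)
        (∑ i, (InnerProductSpace.toDual ℝ (EuclideanSpace ℝ (Fin d))) (gradf i y)) y :=
      HasFDerivAt.fun_sum fun i _ => (hgrad i y).hasFDerivAt
    have h2 := hs.const_smul ((1:ℝ)/n)
    have e1 : (InnerProductSpace.toDual ℝ (EuclideanSpace ℝ (Fin d))) (G y)
        = ((1:ℝ)/n) • ∑ i, (InnerProductSpace.toDual ℝ (EuclideanSpace ℝ (Fin d))) (gradf i y) := by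
      simp [hG, map_sum]
    rw [e1]
    have : F = fun z => ((1:ℝ)/n) • ∑ i, f i z := by
      funext z; simp [hF, smul_eq_mul]
    rw [this]
    exact h2
  have hlipF : ∀ x y, ‖G x - G y‖ ≤ Lf * ‖x - y‖ := by
    intro x y
    rw [hG]
    exact hFsmooth x y
  have hphi1 : ∀ T : AdsagaState d n m, phi1 f xstar η T = 4 * m * η * (F T.x - F xstar) := by
    intro T
    simp only [phi1, hF]
  have hstep : ∀ (j : Fin m) (i : Fin n),
      phi1 f xstar η (AdsagaState.step gradf p pmin η S j i)
        ≤ phi1 f xstar η S + 4 * m * η * qq j := by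
    intro j i
    have hdesc := adsaga_descent_lemma F G Lf hLf.le hgradF hlipF S.x (δ j)
    have h0 : (0:ℝ) ≤ 4 * m * η := by positivity
    have h2 := mul_le_mul_of_nonneg_left hdesc h0
    rw [hphi1, hphi1]
    have hx' : (AdsagaState.step gradf p pmin η S j i).x = S.x + δ j := by
      simp only [AdsagaState.step, hδ]
      rw [sub_eq_add_neg]
    rw [hx']
    have eqq : qq j = ⟪G S.x, δ j⟫ + Lf / 2 * ‖δ j‖ ^ 2 := by simp only [hqq]
    rw [eqq]
    nlinarith [h2]
  have hwt : ∀ i : Fin n, (0:ℝ) ≤ p (J i) * ((m:ℝ)/n) :=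
    fun i => mul_nonneg (hp (J i)).le (by positivity)
  have hgroup : ∀ g : Fin m → ℝ, ∑ i : Fin n, g (J i) = ∑ j, ((n/m : ℕ) : ℝ) * g j := by
    intro g
    rw [← Finset.sum_fiberwise' Finset.univ J g]
    refine Finset.sum_congr rfl fun j _ => ?_
    rw [Finset.sum_const, hpart j, nsmul_eq_mul]
  have hc : ((n/m : ℕ) : ℝ) = (n:ℝ) / m := by
    rw [Nat.cast_div hmn hm0]
  have hA : (∑ i : Fin n, p (J i) * ((m : ℝ)/n)
        * phi1 f xstar η (AdsagaState.step gradf p pmin η S (J i) i))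
      ≤ phi1 f xstar η S + ∑ j, 4 * m * η * p j * qq j := by
    calc (∑ i : Fin n, p (J i) * ((m : ℝ)/n)
        * phi1 f xstar η (AdsagaState.step gradf p pmin η S (J i) i))
        ≤ ∑ i : Fin n, p (J i) * ((m : ℝ)/n) * (phi1 f xstar η S + 4 * m * η * qq (J i)) :=
          Finset.sum_le_sum fun i _ => mul_le_mul_of_nonneg_left (hstep (J i) i) (hwt i)
      _ = ∑ j, ((n/m : ℕ) : ℝ) * (p j * ((m : ℝ)/n) * (phi1 f xstar η S + 4 * m * η * qq j)) :=
          hgroup (fun j => p j * ((m : ℝ)/n) * (phi1 f xstar η S + 4 * m * η * qq j))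
      _ = ∑ j, (p j * phi1 f xstar η S + 4 * m * η * p j * qq j) := by
          refine Finset.sum_congr rfl fun j _ => ?_
          rw [hc]
          field_simp
      _ = phi1 f xstar η S + ∑ j, 4 * m * η * p j * qq j := by
          rw [Finset.sum_add_distrib, ← Finset.sum_mul, hpsum, one_mul]
  have hB : ∀ j, 4 * m * η * p j * qq j
      ≤ -(4 * m * η ^ 2 * pmin) * ⟪G S.x, S.u j + S.abar⟫
        + 2 * m * Lf * η ^ 3 * pmin * ‖S.u j + S.abar‖ ^ 2 := by
    intro j
    have hpj := hp j
    have e1 : ⟪G S.x, δ j⟫ = -((η * pmin / p j) * ⟪G S.x, S.u j + S.abar⟫) := by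
      simp only [hδ]
      rw [inner_neg_right, real_inner_smul_right]
    have e2 : ‖δ j‖ ^ 2 = (η * pmin / p j) ^ 2 * ‖S.u j + S.abar‖ ^ 2 := by
      simp only [hδ]
      rw [norm_neg, norm_smul, Real.norm_eq_abs,
        abs_of_pos (by positivity : 0 < η * pmin / p j), mul_pow]
    have h6 : p j * (η * pmin / p j) ^ 2 ≤ η ^ 2 * pmin := by
      rw [div_pow, mul_div_assoc']
      rw [div_le_iff₀ (by positivity)]
      have h7 : pmin * pmin ≤ pmin * p j := mul_le_mul_of_nonneg_left (hple j) hpminpos.le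
      nlinarith [mul_le_mul_of_nonneg_left h7 (mul_nonneg (sq_nonneg η) (hp j).le)]
    have eq : qq j = -((η * pmin / p j) * ⟪G S.x, S.u j + S.abar⟫)
        + Lf / 2 * ((η * pmin / p j) ^ 2 * ‖S.u j + S.abar‖ ^ 2) := by
      simp only [hqq]
      rw [e1, e2]
    have hN : (0:ℝ) ≤ ‖S.u j + S.abar‖ ^ 2 := sq_nonneg _
    calc 4 * (m:ℝ) * η * p j * qq j
        = -(4 * m * η ^ 2 * pmin) * ⟪G S.x, S.u j + S.abar⟫
          + (2 * m * η * Lf) * (p j * (η * pmin / p j) ^ 2) * ‖S.u j + S.abar‖ ^ 2 := by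
          rw [eq]
          field_simp
          ring
      _ ≤ -(4 * m * η ^ 2 * pmin) * ⟪G S.x, S.u j + S.abar⟫
          + (2 * m * η * Lf) * (η ^ 2 * pmin) * ‖S.u j + S.abar‖ ^ 2 := by
          have := mul_le_mul_of_nonneg_right
            (mul_le_mul_of_nonneg_left h6 (by positivity : (0:ℝ) ≤ 2 * m * η * Lf)) hN
          linarith
      _ = -(4 * m * η ^ 2 * pmin) * ⟪G S.x, S.u j + S.abar⟫
          + 2 * m * Lf * η ^ 3 * pmin * ‖S.u j + S.abar‖ ^ 2 := by ring
  have hC1 : ∑ j, ⟪G S.x, S.u j + S.abar⟫ = ((1:ℝ)/n) * ⟪S.v, ∑ i, gradf i S.x⟫ := by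
    rw [← inner_sum]
    have e1 : ∑ j, (S.u j + S.abar) = S.v := by
      rw [Finset.sum_add_distrib, Finset.sum_const, Finset.card_univ, Fintype.card_fin,
        AdsagaState.v, ← Nat.cast_smul_eq_nsmul ℝ]
    rw [e1, hG]
    simp only
    rw [real_inner_smul_left, real_inner_comm]
  have hC2 : ∀ j, ‖S.u j + S.abar‖ ^ 2 ≤ 2 * ‖S.u j‖ ^ 2 + 2 * ‖S.abar‖ ^ 2 := by
    intro j
    have h1 := norm_add_le (S.u j) S.abar
    nlinarith [sq_nonneg (‖S.u j‖ - ‖S.abar‖), norm_nonneg (S.u j + S.abar),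
      mul_self_le_mul_self (norm_nonneg (S.u j + S.abar)) h1]
  have habar : ‖S.abar‖ ^ 2 ≤ ((1:ℝ)/n) * ∑ i, ‖S.alpha i - gradf i xstar‖ ^ 2 := by
    have e1 : S.abar = ((1:ℝ)/n) • ∑ i, (S.alpha i - gradf i xstar) := by
      rw [AdsagaState.abar, Finset.sum_sub_distrib, hstarzero, sub_zero]
    have h1 : ‖S.abar‖ ≤ ((1:ℝ)/n) * ∑ i, ‖S.alpha i - gradf i xstar‖ := by
      rw [e1, norm_smul, Real.norm_eq_abs, abs_of_pos (by positivity : (0:ℝ) < 1/n)]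
      exact mul_le_mul_of_nonneg_left (norm_sum_le _ _) (by positivity)
    have h2 : (∑ i, ‖S.alpha i - gradf i xstar‖) ^ 2
        ≤ (n:ℝ) * ∑ i, ‖S.alpha i - gradf i xstar‖ ^ 2 := by
      have := sq_sum_le_card_mul_sum_sq (s := (Finset.univ : Finset (Fin n)))
        (f := fun i => ‖S.alpha i - gradf i xstar‖)
      simpa [Finset.card_univ] using this
    have h3 : ‖S.abar‖ ^ 2 ≤ (((1:ℝ)/n) * ∑ i, ‖S.alpha i - gradf i xstar‖) ^ 2 := by
      have := norm_nonneg S.abar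
      nlinarith [h1, Finset.sum_nonneg fun i (_ : i ∈ Finset.univ) =>
        norm_nonneg (S.alpha i - gradf i xstar)]
    calc ‖S.abar‖ ^ 2 ≤ (((1:ℝ)/n) * ∑ i, ‖S.alpha i - gradf i xstar‖) ^ 2 := h3
      _ = ((1:ℝ)/n)^2 * (∑ i, ‖S.alpha i - gradf i xstar‖) ^ 2 := by ring
      _ ≤ ((1:ℝ)/n)^2 * ((n:ℝ) * ∑ i, ‖S.alpha i - gradf i xstar‖ ^ 2) :=
          mul_le_mul_of_nonneg_left h2 (by positivity)
      _ = ((1:ℝ)/n) * ∑ i, ‖S.alpha i - gradf i xstar‖ ^ 2 := by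
          field_simp
  have hBsum : ∑ j, 4 * m * η * p j * qq j
      ≤ -(4 * m * η ^ 2 * pmin) * ∑ j, ⟪G S.x, S.u j + S.abar⟫
        + 2 * m * Lf * η ^ 3 * pmin * ∑ j, ‖S.u j + S.abar‖ ^ 2 := by
    calc ∑ j, 4 * m * η * p j * qq j
        ≤ ∑ j, (-(4 * m * η ^ 2 * pmin) * ⟪G S.x, S.u j + S.abar⟫
            + 2 * m * Lf * η ^ 3 * pmin * ‖S.u j + S.abar‖ ^ 2) :=
          Finset.sum_le_sum fun j _ => hB j
      _ = _ := by rw [Finset.sum_add_distrib, ← Finset.mul_sum, ← Finset.mul_sum]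
  have hC2sum : ∑ j, ‖S.u j + S.abar‖ ^ 2
      ≤ 2 * ∑ j, ‖S.u j‖ ^ 2 + 2 * m * ‖S.abar‖ ^ 2 := by
    calc ∑ j, ‖S.u j + S.abar‖ ^ 2
        ≤ ∑ j, (2 * ‖S.u j‖ ^ 2 + 2 * ‖S.abar‖ ^ 2) := Finset.sum_le_sum fun j _ => hC2 j
      _ = 2 * ∑ j, ‖S.u j‖ ^ 2 + 2 * m * ‖S.abar‖ ^ 2 := by
          rw [Finset.sum_add_distrib, ← Finset.mul_sum, Finset.sum_const, Finset.card_univ,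
            Fintype.card_fin, nsmul_eq_mul]
          ring
  have hpos1 : (0:ℝ) ≤ 2 * m * Lf * η ^ 3 * pmin := by positivity
  have hfin1 := mul_le_mul_of_nonneg_left hC2sum hpos1
  have hpos2 : (0:ℝ) ≤ 4 * m ^ 2 * Lf * η ^ 3 * pmin := by positivity
  have hfin2 := mul_le_mul_of_nonneg_left habar hpos2
  rw [hC1] at hBsum
  have e0 : -(4 * (m:ℝ) * η ^ 2 * pmin) * (((1:ℝ)/n) * ⟪S.v, ∑ i, gradf i S.x⟫)
      = -(4 * (m : ℝ) * η ^ 2 * pmin / n) * ⟪S.v, ∑ i, gradf i S.x⟫ := by ring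
  have e1' : 2 * (m:ℝ) * Lf * η ^ 3 * pmin * (2 * ∑ j, ‖S.u j‖ ^ 2 + 2 * m * ‖S.abar‖ ^ 2)
      = 4 * (m:ℝ) * Lf * η ^ 3 * pmin * (∑ j, ‖S.u j‖ ^ 2)
        + 4 * (m:ℝ) ^ 2 * Lf * η ^ 3 * pmin * ‖S.abar‖ ^ 2 := by ring
  have e2' : 4 * (m:ℝ) ^ 2 * Lf * η ^ 3 * pmin
        * (((1:ℝ)/n) * ∑ i, ‖S.alpha i - gradf i xstar‖ ^ 2)
      = (4 * (m : ℝ) ^ 2 * Lf * η ^ 3 * pmin / n)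
        * (∑ i, ‖S.alpha i - gradf i xstar‖ ^ 2) := by ring
  linarith [hA, hBsum, hfin1, hfin2, e0, e1', e2']
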